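/- In the finite discounted MDP setting with positivity, the policy value is identified by marginal importance sampling: J(γ) = (1−γ)^{−1} E_{(s,a,r,s′)∼p_b}[μ*(s,a)·r], where μ*(s,a) = p^{(∞)}_{e,γ}(s)π^e(a|s)/(p_b(s)π^b(a|s)) is the marginal density ratio. -/

import Mathlib

open Finset

/-- Finite discounted MDP with positivity. The policy value is identified
by marginal importance sampling:
`J(γ) = (1−γ)⁻¹ E_{(s,a,r,s') ∼ p_b}[μ*(s,a) · r]`, where
`μ*(s,a) = p^{(∞)}_{e,γ}(s) π^e(a|s) / (p_b(s) π^b(a|s))`. -/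
theorem mdp_marginal_is_identification
    {S A R : Type} [Fintype S] [Fintype A] [Fintype R]
    (rval : R → ℝ) (γ : ℝ) (hγ0 : 0 ≤ γ) (hγ1 : γ < 1)
    (p : S → A → S × R → ℝ)
    (hp0 : ∀ s a sr, 0 ≤ p s a sr) (hpsum : ∀ s a, ∑ sr : S × R, p s a sr = 1)
    (pie : S → A → ℝ) (hpie0 : ∀ s a, 0 ≤ pie s a) (hpie1 : ∀ s, ∑ a, pie s a = 1)
    (p1e : S → ℝ) (hp1e0 : ∀ s, 0 ≤ p1e s) (hp1e1 : ∑ s, p1e s = 1)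
    (pb : S → ℝ) (hpb0 : ∀ s, 0 ≤ pb s) (hpb1 : ∑ s, pb s = 1)
    (pib : S → A → ℝ) (hpib0 : ∀ s a, 0 ≤ pib s a) (hpib1 : ∀ s, ∑ a, pib s a = 1)
    (pe : ℕ → S → ℝ)
    (hpe0 : ∀ s, pe 0 s = p1e s)
    (hpeS : ∀ n s', pe (n + 1) s' = ∑ s, ∑ a, pe n s * pie s a * ∑ r : R, p s a (s', r))
    (pinf : S → ℝ) (hpinf : ∀ s, pinf s = (1 - γ) * ∑' n : ℕ, γ ^ n * pe n s)
    (J : ℝ)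
    (hJ : J = ∑' n : ℕ, γ ^ n *
        ∑ s, ∑ a, ∑ sr : S × R, pe n s * pie s a * p s a sr * rval sr.2)
    (μ : S → A → ℝ) (hμ : ∀ s a, μ s a = pinf s * pie s a / (pb s * pib s a))
    (hpos : ∀ s a, 0 < pinf s * pie s a → 0 < pb s * pib s a) :
    J = (1 - γ)⁻¹ *
        ∑ s, ∑ a, ∑ sr : S × R, pb s * pib s a * p s a sr * (μ s a * rval sr.2) := by

  classical
  -- nonnegativity of pe
  have hpe_nonneg : ∀ n s, 0 ≤ pe n s := by
    intro n
    induction n with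
    | zero => intro s; rw [hpe0]; exact hp1e0 s
    | succ n ih =>
      intro s'
      rw [hpeS]
      refine Finset.sum_nonneg fun s _ => Finset.sum_nonneg fun a _ => ?_
      exact mul_nonneg (mul_nonneg (ih s) (hpie0 s a))
        (Finset.sum_nonneg fun r _ => hp0 s a (s', r))
  have key : ∀ s a, ∑ s' : S, ∑ r : R, p s a (s', r) = 1 := by
    intro s a; rw [← Fintype.sum_prod_type]; exact hpsum s a
  have hpe_sum : ∀ n, ∑ s, pe n s = 1 := by
    intro n
    induction n with
    | zero => simp [hpe0, hp1e1]
    | succ n ih =>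
      calc ∑ s', pe (n + 1) s'
          = ∑ s', ∑ s, ∑ a, pe n s * pie s a * ∑ r : R, p s a (s', r) := by
            simp only [hpeS]
        _ = ∑ s, ∑ a, pe n s * pie s a * ∑ s', ∑ r : R, p s a (s', r) := by
            rw [Finset.sum_comm]
            refine Finset.sum_congr rfl fun s _ => ?_
            rw [Finset.sum_comm]
            refine Finset.sum_congr rfl fun a _ => ?_
            rw [Finset.mul_sum]
        _ = 1 := by simp only [key, mul_one, ← Finset.mul_sum, hpie1, ih]
  have hpe_le : ∀ n s, pe n s ≤ 1 := by
    intro n s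
    have := Finset.single_le_sum (fun i (_ : i ∈ Finset.univ) => hpe_nonneg n i)
      (Finset.mem_univ s)
    rwa [hpe_sum n] at this
  have hgeo : Summable (fun n : ℕ => γ ^ n) :=
    summable_geometric_of_lt_one hγ0 hγ1
  have hsum : ∀ s, Summable (fun n : ℕ => γ ^ n * pe n s) := by
    intro s
    refine Summable.of_nonneg_of_le
      (fun n => mul_nonneg (pow_nonneg hγ0 n) (hpe_nonneg n s))
      (fun n => ?_) hgeo
    calc γ ^ n * pe n s ≤ γ ^ n * 1 :=
          mul_le_mul_of_nonneg_left (hpe_le n s) (pow_nonneg hγ0 n)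
      _ = γ ^ n := mul_one _
  have hpinf_nonneg : ∀ s, 0 ≤ pinf s := by
    intro s
    rw [hpinf]
    exact mul_nonneg (by linarith)
      (tsum_nonneg fun n => mul_nonneg (pow_nonneg hγ0 n) (hpe_nonneg n s))
  set c : S → ℝ := fun s => ∑ a, ∑ sr : S × R, pie s a * p s a sr * rval sr.2 with hc
  have hstep : ∀ s a, pb s * pib s a * μ s a = pinf s * pie s a := by
    intro s a
    rcases eq_or_ne (pb s * pib s a) 0 with h | h
    · rw [h, zero_mul]
      by_contra hne
      have hpos' : 0 < pinf s * pie s a :=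
        lt_of_le_of_ne (mul_nonneg (hpinf_nonneg s) (hpie0 s a)) hne
      exact absurd h (ne_of_gt (hpos s a hpos'))
    · rw [hμ, mul_div_assoc', mul_div_cancel_left₀ _ h]
  have hRHS : (∑ s, ∑ a, ∑ sr : S × R, pb s * pib s a * p s a sr * (μ s a * rval sr.2))
      = ∑ s, pinf s * c s := by
    refine Finset.sum_congr rfl fun s _ => ?_
    rw [hc, Finset.mul_sum]
    refine Finset.sum_congr rfl fun a _ => ?_
    rw [Finset.mul_sum]
    refine Finset.sum_congr rfl fun sr _ => ?_
    have : pb s * pib s a * p s a sr * (μ s a * rval sr.2)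
        = (pb s * pib s a * μ s a) * (p s a sr * rval sr.2) := by ring
    rw [this, hstep]
    ring
  have hT : ∀ n, (∑ s, ∑ a, ∑ sr : S × R, pe n s * pie s a * p s a sr * rval sr.2)
      = ∑ s, pe n s * c s := by
    intro n
    refine Finset.sum_congr rfl fun s _ => ?_
    rw [hc, Finset.mul_sum]
    refine Finset.sum_congr rfl fun a _ => ?_
    rw [Finset.mul_sum]
    refine Finset.sum_congr rfl fun sr _ => ?_
    ring
  have hJ' : J = ∑' n : ℕ, γ ^ n * ∑ s, pe n s * c s := by
    rw [hJ]; exact tsum_congr fun n => by rw [hT]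
  have hsum2 : ∀ s : S, Summable (fun n : ℕ => γ ^ n * pe n s * c s) :=
    fun s => (hsum s).mul_right (c s)
  have hmain : (∑ s, pinf s * c s) = (1 - γ) * J := by
    calc ∑ s, pinf s * c s
        = ∑ s, (1 - γ) * ∑' n : ℕ, γ ^ n * pe n s * c s := by
          refine Finset.sum_congr rfl fun s _ => ?_
          rw [hpinf, mul_assoc, ← tsum_mul_right]
      _ = (1 - γ) * ∑ s, ∑' n : ℕ, γ ^ n * pe n s * c s := by rw [Finset.mul_sum]
      _ = (1 - γ) * ∑' n : ℕ, ∑ s, γ ^ n * pe n s * c s := by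
          rw [Summable.tsum_finsetSum fun s _ => hsum2 s]
      _ = (1 - γ) * ∑' n : ℕ, γ ^ n * ∑ s, pe n s * c s := by
          congr 1
          refine tsum_congr fun n => ?_
          rw [Finset.mul_sum]
          exact Finset.sum_congr rfl fun s _ => by ring
      _ = (1 - γ) * J := by rw [hJ']
  have hγne : (1 - γ) ≠ 0 := by linarith
  rw [hRHS, hmain]
  field_simp
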